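/- Let U be a subgroup of G not contained in S_h × S_n × {id}, and let C and C' be U-consistent social choice correspondences. Suppose there exist a system of representatives (p^j)_{j ∈ P^U} of the U-orbits of P and an element (φ_*, ψ_*, ρ_0) ∈ U such that C(p^j) = C'(p^j) for every U-orbit j, and C(p^{j (φ_*,ψ_*,ρ_0)}) = C'(p^{j (φ_*,ψ_*,ρ_0)}) for every j ∈ P_1^U. Then C = C'. -/

import Mathlib

/-!
Common framework: preferences on `n ≥ 2` alternatives (`Fin n`) expressed by `h ≥ 2`
individuals (`Fin h`).  Following the paper, a linear order `q ∈ L(N)` is identified with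
the permutation of `Fin n` sending each rank position (`0` = best) to the alternative
occupying that position.
-/

/-- A preference relation (a linear order on the set `Fin n` of alternatives), identified
with the permutation sending each rank position (`0` = best) to the alternative at
that position. -/
abbrev Pref (n : ℕ) := Equiv.Perm (Fin n)

/-- `x ⪰_q y` : alternative `x` is weakly preferred to `y` in `q`. -/
def prefGE {n : ℕ} (q : Pref n) (x y : Fin n) : Prop := q.symm x ≤ q.symm y

/-- `x ≻_q y` : alternative `x` is strictly preferred to `y` in `q`. -/
def prefGT {n : ℕ} (q : Pref n) (x y : Fin n) : Prop := q.symm x < q.symm y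

instance {n : ℕ} (q : Pref n) (x y : Fin n) : Decidable (prefGT q x y) :=
  inferInstanceAs (Decidable (q.symm x < q.symm y))

/-- A preference profile: one preference relation for each individual. -/
abbrev Profile (n h : ℕ) := Fin h → Pref n

/-- A social choice correspondence (the nonemptiness of its values is `IsSCC`). -/
abbrev SCC (n h : ℕ) := Profile n h → Set (Fin n)

/-- `C` has nonempty values, i.e. `C` really is a social choice correspondence. -/
def IsSCC {n h : ℕ} (C : SCC n h) : Prop := ∀ p, (C p).Nonempty

/-- `C` is resolute: it always selects exactly one alternative. -/
def Resolute {n h : ℕ} (C : SCC n h) : Prop := ∀ p, ∃ x, C p = {x}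

/-- `C'` is a refinement of `C`. -/
def Refines {n h : ℕ} (C' C : SCC n h) : Prop := ∀ p, C' p ⊆ C p

/-- The order-reversing permutation `ρ₀ : r ↦ n - r + 1`. -/
def rho0 (n : ℕ) : Equiv.Perm (Fin n) := Fin.revPerm

/-- The profile `p^{(id,id,ρ₀)}` obtained from `p` by reversing every individual
preference. -/
def revProfile {n h : ℕ} (p : Profile n h) : Profile n h := fun i => p i * rho0 n

/-- `C` is immune to the reversal bias. -/
def Immune {n h : ℕ} (C : SCC n h) : Prop :=
  ∀ (p : Profile n h) (x : Fin n), C p = {x} → C (revProfile p) ≠ C p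

/-- `Y` is a partition: nonempty, pairwise disjoint, covering blocks. -/
def IsPartition {α : Type*} {s : ℕ} (Y : Fin s → Finset α) : Prop :=
  (∀ j, (Y j).Nonempty) ∧ (∀ j k, j ≠ k → Disjoint (Y j) (Y k)) ∧ (∀ a, ∃ j, a ∈ Y j)

/-- The ambient group `S_h × S_n × S_n` (the third component is meant to range in `Ω`). -/
abbrev Amb (n h : ℕ) := Equiv.Perm (Fin h) × Equiv.Perm (Fin n) × Equiv.Perm (Fin n)

/-- The action `p ↦ p^g` of `g = (φ,ψ,ρ)` on profiles. -/
def gact {n h : ℕ} (g : Amb n h) (p : Profile n h) : Profile n h :=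
  fun i => g.2.1 * p (g.1⁻¹ i) * g.2.2

/-- The group `Ω = {id, ρ₀}`. -/
def OmegaGrp (n : ℕ) : Subgroup (Equiv.Perm (Fin n)) := Subgroup.zpowers (rho0 n)

/-- The group `G = S_h × S_n × Ω`. -/
def bigG (n h : ℕ) : Subgroup (Amb n h) :=
  (⊤ : Subgroup (Equiv.Perm (Fin h))).prod
    ((⊤ : Subgroup (Equiv.Perm (Fin n))).prod (OmegaGrp n))

/-- `U`-consistency of a social choice correspondence `C`: for every `p` and every
`(φ,ψ,ρ) ∈ U`, if `ρ = id` then `C(p^{(φ,ψ,id)}) = ψ C(p)`, and if `ρ = ρ₀` and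
`|C(p)| = 1` then `C(p^{(φ,ψ,ρ₀)}) ≠ ψ C(p)`. -/
def UConsistent {n h : ℕ} (U : Subgroup (Amb n h)) (C : SCC n h) : Prop :=
  ∀ (p : Profile n h), ∀ g ∈ U,
    (g.2.2 = 1 → C (gact g p) = g.2.1 '' C p) ∧
    (g.2.2 = rho0 n → ∀ x : Fin n, C p = {x} → C (gact g p) ≠ g.2.1 '' C p)

/-- A subgroup `U` of `G` is regular: for every profile `p` there is `ψ⋆ ∈ S_n`
conjugate to `ρ₀` with `Stab_U(p) ⊆ (S_h × {id} × {id}) ∪ (S_h × {ψ⋆} × {ρ₀})`. -/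
def RegularSubgroup {n h : ℕ} (U : Subgroup (Amb n h)) : Prop :=
  ∀ p : Profile n h, ∃ ψs : Equiv.Perm (Fin n), IsConj (rho0 n) ψs ∧
    ∀ g ∈ U, gact g p = p →
      (g.2.1 = 1 ∧ g.2.2 = 1) ∨ (g.2.1 = ψs ∧ g.2.2 = rho0 n)

/-- `p` and `q` lie in the same `U`-orbit. -/
def SameOrbit {n h : ℕ} (U : Subgroup (Amb n h)) (p q : Profile n h) : Prop :=
  ∃ g ∈ U, gact g p = q

/-- `S` is a system of representatives of the `U`-orbits: every profile is in the
orbit of exactly one element of `S`. -/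
def IsRepSystem {n h : ℕ} (U : Subgroup (Amb n h)) (S : Set (Profile n h)) : Prop :=
  ∀ p : Profile n h, ∃! r, r ∈ S ∧ SameOrbit U r p

/-- The stabilizer of `r` in `U` is contained in `S_h × S_n × {id}` (i.e. the
`U`-orbit of `r` belongs to `P₁ᵁ`). -/
def StabIn1 {n h : ℕ} (U : Subgroup (Amb n h)) (r : Profile n h) : Prop :=
  ∀ g ∈ U, gact g r = r → g.2.2 = 1

lemma rho0_mul_self {n : ℕ} : rho0 n * rho0 n = 1 := by
  ext x
  simp [rho0]

lemma gact_one' {n h : ℕ} (p : Profile n h) : gact (1 : Amb n h) p = p := by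
  funext i
  simp [gact]

lemma gact_mul' {n h : ℕ} (a b : Amb n h) (hc : a.2.2 * b.2.2 = b.2.2 * a.2.2)
    (p : Profile n h) : gact (a * b) p = gact a (gact b p) := by
  funext i
  simp only [gact, Prod.fst_mul, Prod.snd_mul, mul_inv_rev, Equiv.Perm.mul_apply]
  rw [hc]
  simp [mul_assoc]

lemma mem_omega' {n : ℕ} {ρ : Equiv.Perm (Fin n)} (hρ : ρ ∈ OmegaGrp n) :
    ρ = 1 ∨ ρ = rho0 n := by
  obtain ⟨k, hk⟩ := Subgroup.mem_zpowers_iff.mp hρ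
  rcases Int.even_or_odd k with ⟨m, hm⟩ | ⟨m, hm⟩
  · left
    rw [← hk, hm, ← two_mul, zpow_mul]
    norm_num [zpow_two, pow_two, rho0_mul_self]
  · right
    rw [← hk, hm, zpow_add, zpow_mul]
    norm_num [zpow_two, pow_two, rho0_mul_self]

lemma agree_of_triv {n h : ℕ} {U : Subgroup (Amb n h)} {C C' : SCC n h}
    (hC : UConsistent U C) (hC' : UConsistent U C') {q : Profile n h}
    (hq : C q = C' q) {k : Amb n h} (hk : k ∈ U) (hk3 : k.2.2 = 1) :
    C (gact k q) = C' (gact k q) := by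
  rw [(hC q k hk).1 hk3, (hC' q k hk).1 hk3, hq]

/-- Proposition `rappresentanti2`: two `U`-consistent sccs that agree on
a system of representatives of the `U`-orbits, and on `p^{j (φ*,ψ*,ρ₀)}` for every
orbit `j ∈ P₁ᵁ`, coincide, when `U` is not contained in `S_h × S_n × {id}`. -/
theorem statement9 {n h : ℕ} (hh : 2 ≤ h) (hn : 2 ≤ n)
    (U : Subgroup (Amb n h)) (hUG : U ≤ bigG n h)
    (hU2 : ∃ g ∈ U, g.2.2 ≠ 1)
    (C C' : SCC n h) (hC : UConsistent U C) (hC' : UConsistent U C')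
    (S : Set (Profile n h)) (hS : IsRepSystem U S)
    (gs : Amb n h) (hgs : gs ∈ U) (hgs3 : gs.2.2 = rho0 n)
    (heq : ∀ r ∈ S, C r = C' r)
    (heq1 : ∀ r ∈ S, StabIn1 U r → C (gact gs r) = C' (gact gs r)) :
    C = C' := by
  funext p
  obtain ⟨r, ⟨hrS, g, hgU, hgr⟩, -⟩ := hS p
  have hbig := hUG hgU
  rw [bigG, Subgroup.mem_prod, Subgroup.mem_prod] at hbig
  rcases mem_omega' hbig.2.2 with h1 | h0
  · rw [← hgr]
    exact agree_of_triv hC hC' (heq r hrS) hgU h1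
  · by_cases hst : StabIn1 U r
    · have key := heq1 r hrS hst
      have hk : (g * gs⁻¹) ∈ U := mul_mem hgU (inv_mem hgs)
      have hk3 : (g * gs⁻¹).2.2 = 1 := by
        simp [Prod.snd_mul, h0, hgs3]
      have hdecomp : gact g r = gact (g * gs⁻¹) (gact gs r) := by
        rw [← gact_mul' _ _ (by rw [hk3]; simp), inv_mul_cancel_right]
      rw [← hgr, hdecomp]
      exact agree_of_triv hC hC' key hk hk3
    · simp only [StabIn1, not_forall] at hst
      obtain ⟨u, huU, hur, hu3⟩ := hst
      have hbu := hUG huU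
      rw [bigG, Subgroup.mem_prod, Subgroup.mem_prod] at hbu
      have hu0 : u.2.2 = rho0 n := (mem_omega' hbu.2.2).resolve_left hu3
      have hk : (g * u⁻¹) ∈ U := mul_mem hgU (inv_mem huU)
      have hk3 : (g * u⁻¹).2.2 = 1 := by
        simp [Prod.snd_mul, h0, hu0]
      have hui : gact u⁻¹ r = r := by
        have h2 := gact_mul' u⁻¹ u (by simp) r
        rw [inv_mul_cancel, gact_one', hur] at h2
        exact h2.symm
      have hgp : gact (g * u⁻¹) r = p := by
        rw [gact_mul' _ _ (by simp [h0, hu0]), hui, hgr]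
      rw [← hgp]
      exact agree_of_triv hC hC' (heq r hrS) hk hk3
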